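/- If a pseudo-curve contains a curve then it is a curve: if G ⊆ S¹ is residual, φ : G → I is continuous, PC is the closure in Ω of the graph of φ, and there is a continuous map ψ : S¹ → I whose graph is contained in PC, then PC equals the graph of ψ. -/

import Mathlib

open Set

/-- The graph of `φ` over `G`. -/
def graphOn (G : Set UnitAddCircle) (φ : UnitAddCircle → ℝ) : Set (UnitAddCircle × ℝ) :=
  (fun θ => (θ, φ θ)) '' G

/-- If a pseudo-curve contains a curve (the graph of a continuous map
`ψ : S¹ → I`) then it equals that curve. -/
theorem statement5 (a b : ℝ) (hab : a ≤ b)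
    (G : Set UnitAddCircle) (hG : G ∈ residual UnitAddCircle)
    (φ : UnitAddCircle → ℝ) (hφc : ContinuousOn φ G) (hφI : ∀ θ ∈ G, φ θ ∈ Icc a b)
    (ψ : UnitAddCircle → ℝ) (hψc : Continuous ψ) (hψI : ∀ θ, ψ θ ∈ Icc a b)
    (hgr : (Set.range fun θ => (θ, ψ θ)) ⊆ closure (graphOn G φ)) :
    closure (graphOn G φ) = Set.range fun θ => (θ, ψ θ) := by
  -- φ agrees with ψ on G
  have key : ∀ θ ∈ G, φ θ = ψ θ := by
    intro θ hθ
    have hmem : (θ, ψ θ) ∈ closure (graphOn G φ) := hgr ⟨θ, rfl⟩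
    rw [mem_closure_iff_seq_limit] at hmem
    obtain ⟨u, hu, hlim⟩ := hmem
    choose v hv hvu using hu
    have hE : (fun n => ((v n : UnitAddCircle), φ (v n))) = u := funext hvu
    rw [← hE] at hlim
    have hθlim : Filter.Tendsto v Filter.atTop (nhds θ) := by
      have := (continuous_fst.tendsto ((θ : UnitAddCircle), ψ θ)).comp hlim
      simpa [Function.comp_def] using this
    have hφlim : Filter.Tendsto (fun n => φ (v n)) Filter.atTop (nhds (ψ θ)) := by
      have := (continuous_snd.tendsto ((θ : UnitAddCircle), ψ θ)).comp hlim
      simpa [Function.comp_def] using this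
    have hθlim' : Filter.Tendsto v Filter.atTop (nhdsWithin θ G) := by
      refine tendsto_nhdsWithin_iff.mpr ⟨hθlim, Filter.Eventually.of_forall hv⟩
    have hφlim' : Filter.Tendsto (fun n => φ (v n)) Filter.atTop (nhds (φ θ)) :=
      (hφc θ hθ).tendsto.comp hθlim'
    exact tendsto_nhds_unique hφlim' hφlim
  have hclosed : IsClosed (Set.range fun θ => (θ, ψ θ)) :=
    (isCompact_range (continuous_id.prodMk hψc)).isClosed
  refine subset_antisymm (closure_minimal ?_ hclosed) ?_
  · rintro p ⟨θ, hθ, rfl⟩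
    exact ⟨θ, by simp [key θ hθ]⟩
  · exact hgr.trans (by rfl)
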